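/- arXiv:1502.00494 — 4 statements merged into one kernel-verified Lean document; each statement's English description precedes it below -/
import Mathlib

section
/- Every totally bounded subset of the compact operators on a Hilbert space is uniformly approximable: for every ε > 0 there exists N such that every operator in the subset lies within ε (in operator norm) of some operator of rank at most N. -/
/-- A collection of operators on a Hilbert space is *uniformly approximable* if for every
`ε > 0` there is a common `N` such that every member of the collection is within `ε`
(in operator norm) of an operator of rank at most `N`. -/
def UniformlyApproximable {H : Type*} [NormedAddCommGroup H] [InnerProductSpace ℂ H]
    (𝒜 : Set (H →L[ℂ] H)) : Prop :=
  ∀ ε > (0 : ℝ), ∃ N : ℕ, ∀ T ∈ 𝒜, ∃ k : H →L[ℂ] H,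
    LinearMap.rank (k : H →ₗ[ℂ] H) ≤ (N : Cardinal) ∧ ‖T - k‖ < ε

open Metric Set in
/-- Any compact operator on a Hilbert space can be approximated in operator norm by
finite rank operators. -/
lemma exists_finiteRank_approx {H : Type*} [NormedAddCommGroup H] [InnerProductSpace ℂ H]
    [CompleteSpace H] (T : H →L[ℂ] H) (hT : IsCompactOperator T) {ε : ℝ} (hε : 0 < ε) :
    ∃ k : H →L[ℂ] H, LinearMap.rank (k : H →ₗ[ℂ] H) < Cardinal.aleph0 ∧ ‖T - k‖ < ε := by
  have hK := IsCompactOperator.isCompact_closure_image_closedBall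
    (f := (T : H →ₗ[ℂ] H)) hT 1
  obtain ⟨s, hsfin, hsub⟩ :=
    Metric.totallyBounded_iff.mp hK.totallyBounded (ε / 3) (by positivity)
  set F : Submodule ℂ H := Submodule.span ℂ s with hF
  haveI : FiniteDimensional ℂ F := FiniteDimensional.span_of_finite ℂ hsfin
  set k : H →L[ℂ] H := F.subtypeL.comp ((F.orthogonalProjectionOnto).comp T) with hk
  refine ⟨k, ?_, ?_⟩
  · have hrange : LinearMap.range (k : H →ₗ[ℂ] H) ≤ F := by
      rintro y ⟨x, rfl⟩
      exact (F.orthogonalProjectionOnto (T x)).2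
    calc LinearMap.rank (k : H →ₗ[ℂ] H) ≤ Module.rank ℂ F := Submodule.rank_mono hrange
      _ < Cardinal.aleph0 := Module.rank_lt_aleph0 ℂ F
  · -- first, a bound on the closed unit ball
    have hclaim : ∀ x : H, ‖x‖ ≤ 1 → ‖(T - k) x‖ ≤ 2 * (ε / 3) := by
      intro x hx
      have hTx : (T : H →ₗ[ℂ] H) x ∈ closure ((T : H →ₗ[ℂ] H) '' closedBall 0 1) :=
        subset_closure ⟨x, by simpa using hx, rfl⟩
      have := hsub hTx
      simp only [Set.mem_iUnion] at this
      obtain ⟨y, hy, hdy⟩ := this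
      have hyF : y ∈ F := Submodule.subset_span hy
      have hproj : ‖T x - (F.orthogonalProjectionOnto (T x) : H)‖ ≤ ‖T x - y‖ := by
        rw [Submodule.coe_orthogonalProjectionOnto_apply, Submodule.starProjection_minimal]
        exact ciInf_le ⟨0, by rintro a ⟨u, rfl⟩; exact norm_nonneg _⟩ (⟨y, hyF⟩ : F)
      have hxy : ‖T x - y‖ < ε / 3 := by
        simpa [dist_eq_norm] using hdy
      have hkx : (T - k) x = T x - (F.orthogonalProjectionOnto (T x) : H) := by
        simp [hk]
      rw [hkx]
      nlinarith [norm_nonneg (T x - (F.orthogonalProjectionOnto (T x) : H))]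
    have hle : ‖T - k‖ ≤ 2 * (ε / 3) := by
      refine (T - k).opNorm_le_bound (by positivity) fun x => ?_
      rcases eq_or_ne x 0 with rfl | hx0
      · simp
      · have hnx : (0 : ℝ) < ‖x‖ := norm_pos_iff.mpr hx0
        set c : ℂ := (‖x‖ : ℂ) with hc
        have hcn : ‖c‖ = ‖x‖ := by simp [hc, abs_of_pos hnx]
        have hc0 : c ≠ 0 := by
          rw [hc]
          exact_mod_cast ne_of_gt hnx
        set u : H := c⁻¹ • x with hu
        have hux : c • u = x := smul_inv_smul₀ hc0 x
        have hun : ‖u‖ ≤ 1 := by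
          rw [hu, norm_smul, norm_inv, hcn]
          rw [inv_mul_cancel₀ (ne_of_gt hnx)]
        have : (T - k) x = c • ((T - k) u) := by
          rw [← hux, map_smul]
        rw [this, norm_smul, hcn, mul_comm]
        exact mul_le_mul_of_nonneg_right (hclaim u hun) (le_of_lt hnx)
    linarith

/-- Every totally bounded subset of the compact operators on a Hilbert space is uniformly
approximable. -/
theorem totallyBounded_compactOperators_uniformlyApproximable
    {H : Type*} [NormedAddCommGroup H] [InnerProductSpace ℂ H] [CompleteSpace H]
    (𝒜 : Set (H →L[ℂ] H)) (hcpt : ∀ T ∈ 𝒜, IsCompactOperator T)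
    (htb : TotallyBounded 𝒜) :
    UniformlyApproximable 𝒜 := by
  intro ε hε
  obtain ⟨t, hts, htfin, hcov⟩ := totallyBounded_iff_subset.mp htb
    {p : (H →L[ℂ] H) × (H →L[ℂ] H) | dist p.1 p.2 < ε / 2}
    (Metric.dist_mem_uniformity (by positivity))
  haveI : Fintype t := htfin.fintype
  have H1 : ∀ y : t, ∃ k : H →L[ℂ] H,
      LinearMap.rank (k : H →ₗ[ℂ] H) < Cardinal.aleph0 ∧ ‖(y : H →L[ℂ] H) - k‖ < ε / 2 :=
    fun y => exists_finiteRank_approx _ (hcpt _ (hts y.2)) (by positivity)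
  choose k hk1 hk2 using H1
  refine ⟨Finset.univ.sup fun y : t => (LinearMap.rank ((k y : H →L[ℂ] H) : H →ₗ[ℂ] H)).toNat,
    fun T hT => ?_⟩
  have := hcov hT
  simp only [Set.mem_iUnion] at this
  obtain ⟨y, hy, hdy⟩ := this
  refine ⟨k ⟨y, hy⟩, ?_, ?_⟩
  · have hle : (LinearMap.rank ((k ⟨y, hy⟩ : H →L[ℂ] H) : H →ₗ[ℂ] H)).toNat ≤
        Finset.univ.sup fun y : t => (LinearMap.rank ((k y : H →L[ℂ] H) : H →ₗ[ℂ] H)).toNat :=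
      Finset.le_sup (f := fun y : t => (LinearMap.rank ((k y : H →L[ℂ] H) : H →ₗ[ℂ] H)).toNat) (Finset.mem_univ _)
    rw [← Cardinal.cast_toNat_of_lt_aleph0 (hk1 ⟨y, hy⟩)]
    exact_mod_cast hle
  · have h1 : ‖T - y‖ < ε / 2 := by
      have : dist T y < ε / 2 := hdy
      rwa [dist_eq_norm] at this
    have h2 : ‖y - k ⟨y, hy⟩‖ < ε / 2 := hk2 ⟨y, hy⟩
    calc ‖T - k ⟨y, hy⟩‖ = ‖(T - y) + (y - k ⟨y, hy⟩)‖ := by abel_nf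
      _ ≤ ‖T - y‖ + ‖y - k ⟨y, hy⟩‖ := norm_add_le _ _
      _ < ε := by linarith
end

section
/- Let X be a metric space, H a Hilbert space, and ρ : C_b(X) → B(H) a bounded *-homomorphism. The set of uniformly pseudolocal operators is closed in B(H) with respect to the operator norm: if T_n are uniformly pseudolocal and T_n → T in operator norm, then T is uniformly pseudolocal. -/
open BoundedContinuousFunction

/-- `f ∈ L-Lip_R(X)`: a bounded continuous function which is `L`-Lipschitz, has sup-norm
at most `1`, and whose support has diameter at most `R`. -/
def MemLLipR {X : Type*} [MetricSpace X] (L R : ℝ) (f : X →ᵇ ℂ) : Prop :=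
  LipschitzWith (Real.toNNReal L) ⇑f ∧ ‖f‖ ≤ 1 ∧ Metric.diam (Function.support ⇑f) ≤ R

/-- `T` is *uniformly pseudolocal* (w.r.t. `ρ`) if for all `R, L > 0` the collection of
commutators `{[T, ρ(f)] : f ∈ L-Lip_R(X)}` is uniformly approximable. -/
def UniformlyPseudolocal {X : Type*} [MetricSpace X]
    {H : Type*} [NormedAddCommGroup H] [InnerProductSpace ℂ H] [CompleteSpace H]
    (ρ : (X →ᵇ ℂ) →⋆ₐ[ℂ] (H →L[ℂ] H)) (T : H →L[ℂ] H) : Prop :=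
  ∀ R > (0 : ℝ), ∀ L > (0 : ℝ),
    UniformlyApproximable {A | ∃ f : X →ᵇ ℂ, MemLLipR L R f ∧ A = T * ρ f - ρ f * T}

/-- The uniformly pseudolocal operators are closed in operator norm: an operator-norm limit
of uniformly pseudolocal operators is uniformly pseudolocal. -/
theorem uniformlyPseudolocal_closed
    {X : Type*} [MetricSpace X]
    {H : Type*} [NormedAddCommGroup H] [InnerProductSpace ℂ H] [CompleteSpace H]
    (ρ : (X →ᵇ ℂ) →⋆ₐ[ℂ] (H →L[ℂ] H)) (hρ : Continuous ρ)
    (Tn : ℕ → H →L[ℂ] H) (hTn : ∀ n, UniformlyPseudolocal ρ (Tn n))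
    (T : H →L[ℂ] H) (hlim : Filter.Tendsto Tn Filter.atTop (nhds T)) :
    UniformlyPseudolocal ρ T := by
  intro R hR L hL ε hε
  -- package ρ as a continuous linear map to get a norm bound
  let ρ' : (X →ᵇ ℂ) →L[ℂ] (H →L[ℂ] H) :=
    { toLinearMap := ρ.toAlgHom.toLinearMap, cont := hρ }
  have hρ'pos : (0:ℝ) < ‖ρ'‖ + 1 := by positivity
  have hδpos : (0:ℝ) < ε / (4 * (‖ρ'‖ + 1)) := by positivity
  -- choose n with ‖Tn n - T‖ small
  have htend : Filter.Tendsto (fun n => ‖Tn n - T‖) Filter.atTop (nhds 0) :=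
    (tendsto_iff_norm_sub_tendsto_zero).mp hlim
  have hev : ∀ᶠ n in Filter.atTop, ‖Tn n - T‖ < ε / (4 * (‖ρ'‖ + 1)) :=
    (htend.eventually (gt_mem_nhds hδpos))
  obtain ⟨n, hn⟩ := hev.exists
  obtain ⟨N, hN⟩ := hTn n R hR L hL (ε/2) (by positivity)
  refine ⟨N, ?_⟩
  rintro A ⟨f, hf, rfl⟩
  obtain ⟨k, hk, hknorm⟩ := hN (Tn n * ρ f - ρ f * Tn n) ⟨f, hf, rfl⟩
  refine ⟨k, hk, ?_⟩
  have hρf : ‖ρ f‖ ≤ ‖ρ'‖ := by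
    calc ‖ρ f‖ = ‖ρ' f‖ := rfl
    _ ≤ ‖ρ'‖ * ‖f‖ := ρ'.le_opNorm f
    _ ≤ ‖ρ'‖ * 1 := by
        exact mul_le_mul_of_nonneg_left hf.2.1 (norm_nonneg _)
    _ = ‖ρ'‖ := mul_one _
  have key : ‖(T * ρ f - ρ f * T) - (Tn n * ρ f - ρ f * Tn n)‖ ≤ ε/2 := by
    have h1 : (T * ρ f - ρ f * T) - (Tn n * ρ f - ρ f * Tn n)
        = (T - Tn n) * ρ f - ρ f * (T - Tn n) := by noncomm_ring
    rw [h1]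
    have h2 : ‖(T - Tn n) * ρ f - ρ f * (T - Tn n)‖
        ≤ ‖(T - Tn n) * ρ f‖ + ‖ρ f * (T - Tn n)‖ := norm_sub_le _ _
    have h3 : ‖(T - Tn n) * ρ f‖ ≤ ‖T - Tn n‖ * ‖ρ f‖ := norm_mul_le _ _
    have h4 : ‖ρ f * (T - Tn n)‖ ≤ ‖ρ f‖ * ‖T - Tn n‖ := norm_mul_le _ _
    have hTd : ‖T - Tn n‖ < ε / (4 * (‖ρ'‖ + 1)) := by
      rwa [norm_sub_rev]
    have hbd : ‖T - Tn n‖ * ‖ρ f‖ ≤ (ε / (4 * (‖ρ'‖ + 1))) * (‖ρ'‖ + 1) := by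
      apply mul_le_mul hTd.le (hρf.trans (by linarith)) (norm_nonneg _) hδpos.le
    have heq : (ε / (4 * (‖ρ'‖ + 1))) * (‖ρ'‖ + 1) = ε/4 := by
      field_simp
    have h5 : ‖ρ f‖ * ‖T - Tn n‖ = ‖T - Tn n‖ * ‖ρ f‖ := mul_comm _ _
    nlinarith [norm_nonneg (T - Tn n), norm_nonneg (ρ f)]
  calc ‖(T * ρ f - ρ f * T) - k‖
      ≤ ‖(T * ρ f - ρ f * T) - (Tn n * ρ f - ρ f * Tn n)‖
        + ‖(Tn n * ρ f - ρ f * Tn n) - k‖ := by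
        simpa using norm_sub_le_norm_sub_add_norm_sub (T * ρ f - ρ f * T) (Tn n * ρ f - ρ f * Tn n) k
  _ < ε/2 + ε/2 := by linarith
  _ = ε := by ring
end

section
/- Let X be a proper metric space, ρ : C_0(X) → B(H) a representation, and T ∈ B(H) uniformly locally compact. Then for every R > 0 the collection {ρ(f) T, T ρ(f) : f ∈ C_c(X), diam(supp f) ≤ R, ‖f‖_∞ ≤ 1} is uniformly approximable, i.e., the Lipschitz condition on f can be dropped. -/
open ZeroAtInfty

set_option maxHeartbeats 1000000 in
/-- On a proper metric space, if `T` is uniformly locally compact (w.r.t. a representation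
`ρ : C₀(X) → B(H)`), i.e. for all `R, L > 0` the collection
`{ρ(f)T, Tρ(f) : f compactly supported, L-Lipschitz, diam(supp f) ≤ R, ‖f‖_∞ ≤ 1}` is
uniformly approximable, then for every `R > 0` the collection
`{ρ(f)T, Tρ(f) : f compactly supported, diam(supp f) ≤ R, ‖f‖_∞ ≤ 1}` is uniformly
approximable: the Lipschitz condition can be dropped. -/
theorem uniformlyLocallyCompact_drop_lipschitz
    {X : Type*} [MetricSpace X] [ProperSpace X]
    {H : Type*} [NormedAddCommGroup H] [InnerProductSpace ℂ H] [CompleteSpace H]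
    (ρ : C₀(X, ℂ) →⋆ₙₐ[ℂ] (H →L[ℂ] H)) (hρ : Continuous ρ)
    (T : H →L[ℂ] H)
    (hT : ∀ R > (0 : ℝ), ∀ L > (0 : ℝ),
      UniformlyApproximable
        {A | ∃ f : C₀(X, ℂ), HasCompactSupport ⇑f ∧ LipschitzWith (Real.toNNReal L) ⇑f ∧
          Metric.diam (Function.support ⇑f) ≤ R ∧ ‖f‖ ≤ 1 ∧ (A = ρ f * T ∨ A = T * ρ f)}) :
    ∀ R > (0 : ℝ),
      UniformlyApproximable
        {A | ∃ f : C₀(X, ℂ), HasCompactSupport ⇑f ∧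
          Metric.diam (Function.support ⇑f) ≤ R ∧ ‖f‖ ≤ 1 ∧ (A = ρ f * T ∨ A = T * ρ f)} := by
  intro R hR ε hε
  -- a bound for the representation
  obtain ⟨C, hC0, hC⟩ := SemilinearMapClass.bound_of_continuous ρ hρ
  have hε' : (0 : ℝ) < ε / (C + 1) := by positivity
  obtain ⟨N, hN⟩ := hT (2 * R + 2) (by linarith) 1 one_pos (ε / (C + 1)) hε'
  refine ⟨N, ?_⟩
  rintro A ⟨f, hcs, hdiam, hnorm, hA⟩
  by_cases hf0 : f = 0
  · refine ⟨0, by simp, ?_⟩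
    have : A = 0 := by
      rcases hA with h | h <;> simp [h, hf0]
    simp [this, hε]
  · -- pick a point in the support of `f`
    have hsupp_ne : (Function.support ⇑f).Nonempty := by
      rw [Function.support_nonempty_iff]
      intro h
      exact hf0 (by ext y; simp [congrFun h y])
    obtain ⟨x, hx⟩ := hsupp_ne
    -- the Lipschitz cutoff
    set φ₀ : X → ℝ := fun y => max 0 (min 1 (R + 1 - dist y x)) with hφ₀def
    have hlip₀ : LipschitzWith 1 φ₀ := by
      have h1 : LipschitzWith 1 fun y : X => R + 1 - dist y x := by
        apply LipschitzWith.of_dist_le_mul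
        intro y z
        have he : (R + 1 - dist y x) - (R + 1 - dist z x) = dist z x - dist y x := by ring
        rw [Real.dist_eq, he, abs_sub_comm, NNReal.coe_one, one_mul]
        exact abs_dist_sub_le y z x
      simpa using (h1.const_min 1).const_max 0
    have hφ₀zero : ∀ y ∉ Metric.closedBall x (R + 1), φ₀ y = 0 := by
      intro y hy
      rw [Metric.mem_closedBall, not_le] at hy
      have : min 1 (R + 1 - dist y x) ≤ 0 := min_le_of_right_le (by linarith)
      simp [hφ₀def, max_eq_left this]
    have hφ₀one : ∀ y ∈ Function.support ⇑f, φ₀ y = 1 := by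
      intro y hy
      have hb : Bornology.IsBounded (Function.support ⇑f) :=
        hcs.isBounded.subset subset_closure
      have hdy : dist y x ≤ R := le_trans (Metric.dist_le_diam_of_mem hb hy hx) hdiam
      have : (1 : ℝ) ≤ R + 1 - dist y x := by linarith
      simp [hφ₀def, min_eq_left this]
    have hφ₀bd : ∀ y, ‖φ₀ y‖ ≤ 1 := by
      intro y
      rw [Real.norm_eq_abs, abs_le]
      constructor
      · have := le_max_left (0:ℝ) (min 1 (R + 1 - dist y x)); linarith
      · exact max_le (by norm_num) (min_le_left _ _)
    have hφcont : Continuous fun y => (φ₀ y : ℂ) :=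
      Complex.continuous_ofReal.comp hlip₀.continuous
    have hφcs : HasCompactSupport fun y => (φ₀ y : ℂ) :=
      HasCompactSupport.intro (isCompact_closedBall x (R + 1))
        (fun y hy => by rw [hφ₀zero y hy]; norm_num)
    set φ : C₀(X, ℂ) := ⟨⟨fun y => (φ₀ y : ℂ), hφcont⟩, hφcs.is_zero_at_infty⟩ with hφdef
    have hφcoe : ⇑φ = fun y => (φ₀ y : ℂ) := rfl
    have hφcs' : HasCompactSupport ⇑φ := hφcs
    have hφlip : LipschitzWith (Real.toNNReal 1) ⇑φ := by
      rw [Real.toNNReal_one]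
      simpa [hφcoe, Function.comp_def] using Complex.isometry_ofReal.lipschitz.comp hlip₀
    have hφsupp : Function.support ⇑φ ⊆ Metric.closedBall x (R + 1) := by
      intro y hy
      by_contra hyn
      exact hy (by rw [hφcoe]; simp [hφ₀zero y hyn])
    have hφdiam : Metric.diam (Function.support ⇑φ) ≤ 2 * R + 2 := by
      calc Metric.diam (Function.support ⇑φ)
          ≤ Metric.diam (Metric.closedBall x (R + 1)) :=
            Metric.diam_mono hφsupp Metric.isBounded_closedBall
        _ ≤ 2 * (R + 1) := Metric.diam_closedBall (by linarith)
        _ = 2 * R + 2 := by ring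
    have hφnorm : ‖φ‖ ≤ 1 := by
      rw [← ZeroAtInftyContinuousMap.norm_toBCF_eq_norm]
      refine (BoundedContinuousFunction.norm_le (by norm_num)).mpr fun y => ?_
      show ‖φ y‖ ≤ 1
      rw [hφcoe]
      simpa using hφ₀bd y
    -- `f * φ = f`
    have hmul : f * φ = f := by
      ext y
      by_cases hy : f y = 0
      · simp [hy]
      · have : φ y = 1 := by
          rw [hφcoe]
          simp [hφ₀one y (by simpa [Function.mem_support] using hy)]
        simp [this]
    have hρf : ρ f * ρ φ = ρ f := by rw [← map_mul, hmul]
    have hρf' : ρ φ * ρ f = ρ f := by rw [← map_mul, mul_comm, hmul]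
    have hρfnorm : ‖ρ f‖ ≤ C := by
      calc ‖ρ f‖ ≤ C * ‖f‖ := hC f
        _ ≤ C * 1 := by nlinarith
        _ = C := mul_one C
    rcases hA with h | h
    · -- A = ρ f * T ; use k approximating ρ φ * T
      obtain ⟨k, hkr, hkn⟩ := hN (ρ φ * T)
        ⟨φ, hφcs', hφlip, hφdiam, hφnorm, Or.inl rfl⟩
      refine ⟨ρ f * k, ?_, ?_⟩
      · exact le_trans (LinearMap.rank_comp_le_right (k : H →ₗ[ℂ] H)
          ((ρ f : H →L[ℂ] H) : H →ₗ[ℂ] H)) hkr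
      · have heq : A - ρ f * k = ρ f * (ρ φ * T - k) := by
          rw [h, mul_sub, ← mul_assoc, hρf]
        rw [heq]
        have hle : ‖ρ f * (ρ φ * T - k)‖ ≤ ‖ρ f‖ * ‖ρ φ * T - k‖ := norm_mul_le _ _
        have h2 : C * (ε / (C + 1)) < ε := by
          rw [mul_div_assoc', div_lt_iff₀ (by linarith)]
          nlinarith
        have h3 : ‖ρ f‖ * ‖ρ φ * T - k‖ ≤ C * ‖ρ φ * T - k‖ :=
          mul_le_mul_of_nonneg_right hρfnorm (norm_nonneg _)
        have h4 : C * ‖ρ φ * T - k‖ ≤ C * (ε / (C + 1)) :=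
          mul_le_mul_of_nonneg_left hkn.le hC0.le
        linarith
    · -- A = T * ρ f ; use k approximating T * ρ φ
      obtain ⟨k, hkr, hkn⟩ := hN (T * ρ φ)
        ⟨φ, hφcs', hφlip, hφdiam, hφnorm, Or.inr rfl⟩
      refine ⟨k * ρ f, ?_, ?_⟩
      · exact le_trans (LinearMap.rank_comp_le_left
          (((ρ f : H →L[ℂ] H)) : H →ₗ[ℂ] H) (k : H →ₗ[ℂ] H)) hkr
      · have heq : A - k * ρ f = (T * ρ φ - k) * ρ f := by
          rw [h, sub_mul, mul_assoc, hρf']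
        rw [heq]
        have hle : ‖(T * ρ φ - k) * ρ f‖ ≤ ‖T * ρ φ - k‖ * ‖ρ f‖ := norm_mul_le _ _
        have h2 : C * (ε / (C + 1)) < ε := by
          rw [mul_div_assoc', div_lt_iff₀ (by linarith)]
          nlinarith
        have h3 : ‖T * ρ φ - k‖ * ‖ρ f‖ ≤ ‖T * ρ φ - k‖ * C :=
          mul_le_mul_of_nonneg_left hρfnorm (norm_nonneg _)
        have h4 : ‖T * ρ φ - k‖ * C ≤ (ε / (C + 1)) * C :=
          mul_le_mul_of_nonneg_right hkn.le hC0.le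
        have h5 : (ε / (C + 1)) * C = C * (ε / (C + 1)) := mul_comm _ _
        linarith
end

section
/- Let V, W be topological vector spaces (or metrizable topological abelian groups), and let φ : V → W be a continuous linear map such that the induced map V/ker φ → im φ is a topological isomorphism onto im φ (with the subspace topology). Let φ̄ : V̄ → W̄ denote the continuous extension of φ to the completions. Then im φ̄ equals the closure of im φ in W̄. -/
open UniformSpace Filter Topology

/-- Let `φ : V → W` be a continuous (uniformly continuous) additive group homomorphism of
(semi)metrizable topological abelian groups which induces a topological isomorphism
`V/ker φ ≅ im φ` — phrased as: the image of every neighborhood of `0` in `V` is a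
neighborhood of `0` within `im φ`. Then the image of the extension
`φ̄ : V̄ → W̄` to the completions equals the closure of `im φ` in `W̄`. -/
theorem range_completion_map_eq_closure_range
    {V W : Type*} [SeminormedAddCommGroup V] [SeminormedAddCommGroup W]
    (φ : V →+ W) (hφ : UniformContinuous ⇑φ)
    (hopen : ∀ U ∈ nhds (0 : V), ∃ S ∈ nhds (0 : W), S ∩ Set.range ⇑φ ⊆ ⇑φ '' U) :
    Set.range (Completion.map ⇑φ)
      = closure ((fun w : W => (w : Completion W)) '' Set.range ⇑φ) := by
  apply Set.Subset.antisymm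
  · rintro _ ⟨v, rfl⟩
    induction v using Completion.induction_on with
    | hp => exact isClosed_closure.preimage (Completion.continuous_map)
    | ih a =>
      rw [Completion.map_coe hφ]
      exact subset_closure ⟨φ a, ⟨a, rfl⟩, rfl⟩
  · intro y hy
    -- choose neighborhoods S n and radii δ n from the openness hypothesis
    choose S hS hSsub using fun n : ℕ =>
      hopen (Metric.ball (0 : V) ((1/2 : ℝ) ^ n)) (Metric.ball_mem_nhds _ (by positivity))
    choose δ hδpos hδsub using fun n => Metric.mem_nhds_iff.mp (hS n)
    set c : ℕ → ℝ := fun n => (1/2) * min ((1/2 : ℝ) ^ n) (min (δ n) (δ (n - 1))) with hc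
    have hcpos : ∀ n, 0 < c n := by
      intro n
      have := hδpos n
      have := hδpos (n - 1)
      have : (0:ℝ) < (1/2:ℝ)^n := by positivity
      simp only [hc]
      positivity
    have hcδ : ∀ n, c n ≤ (1/2) * δ n := by
      intro n
      have h : min ((1/2 : ℝ) ^ n) (min (δ n) (δ (n - 1))) ≤ δ n :=
        (min_le_right _ _).trans (min_le_left _ _)
      simpa [hc] using mul_le_mul_of_nonneg_left h (by norm_num : (0:ℝ) ≤ 1/2)
    have hcδ' : ∀ n, c (n + 1) ≤ (1/2) * δ n := by
      intro n
      have h : min ((1/2 : ℝ) ^ (n+1)) (min (δ (n+1)) (δ (n + 1 - 1))) ≤ δ n := by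
        simpa using (min_le_right ((1/2 : ℝ) ^ (n+1)) _).trans (min_le_right (δ (n+1)) _)
      simpa [hc] using mul_le_mul_of_nonneg_left h (by norm_num : (0:ℝ) ≤ 1/2)
    have hcpow : ∀ n, c n ≤ (1/2 : ℝ) ^ n := by
      intro n
      have h : min ((1/2 : ℝ) ^ n) (min (δ n) (δ (n - 1))) ≤ (1/2 : ℝ) ^ n := min_le_left _ _
      have h2 : (1/2 : ℝ) * min ((1/2 : ℝ) ^ n) (min (δ n) (δ (n - 1))) ≤ (1/2) * (1/2:ℝ)^n :=
        mul_le_mul_of_nonneg_left h (by norm_num)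
      have h3 : (1/2:ℝ) * (1/2:ℝ)^n ≤ (1/2:ℝ)^n := by
        have : (0:ℝ) ≤ (1/2:ℝ)^n := by positivity
        linarith
      exact le_trans h2 h3
    -- choose approximating points x n in V
    have hx : ∀ n : ℕ, ∃ x : V, dist y ((φ x : W) : Completion W) < c n := by
      intro n
      obtain ⟨b, hb, hbd⟩ := Metric.mem_closure_iff.mp hy (c n) (hcpos n)
      obtain ⟨w, ⟨x, rfl⟩, rfl⟩ := hb
      exact ⟨x, hbd⟩
    choose x hxd using hx
    -- successive differences lie in S n ∩ range φ
    have key : ∀ n, φ (x (n + 1)) - φ (x n) ∈ S n ∩ Set.range ⇑φ := by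
      intro n
      constructor
      · apply hδsub n
        rw [Metric.mem_ball, dist_zero_right] at *
        have hdist : ‖φ (x (n+1)) - φ (x n)‖ = dist (φ (x (n+1))) (φ (x n)) := by
          rw [dist_eq_norm]
        rw [hdist, ← Completion.dist_eq]
        calc dist ((φ (x (n+1)) : W) : Completion W) ((φ (x n) : W) : Completion W)
            ≤ dist ((φ (x (n+1)) : W) : Completion W) y
              + dist y ((φ (x n) : W) : Completion W) := dist_triangle _ _ _
          _ < c (n+1) + c n := by
              have h1 := hxd (n+1)
              rw [dist_comm] at h1
              exact add_lt_add h1 (hxd n)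
          _ ≤ (1/2) * δ n + (1/2) * δ n := add_le_add (hcδ' n) (hcδ n)
          _ = δ n := by ring
      · exact ⟨x (n+1) - x n, by simp [map_sub]⟩
    have key2 : ∀ n, ∃ u : V, ‖u‖ < (1/2 : ℝ) ^ n ∧ φ u = φ (x (n + 1)) - φ (x n) := by
      intro n
      obtain ⟨u, hu, hu2⟩ := hSsub n (key n)
      rw [Metric.mem_ball, dist_zero_right] at hu
      exact ⟨u, hu, hu2⟩
    choose u hu hu2 using key2
    set v : ℕ → V := fun n => x 0 + ∑ k ∈ Finset.range n, u k with hv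
    have hφv : ∀ n, φ (v n) = φ (x n) := by
      intro n
      induction n with
      | zero => simp [hv]
      | succ n ih =>
        have : v (n + 1) = v n + u n := by
          simp [hv, Finset.sum_range_succ, add_assoc]
        rw [this, map_add, ih, hu2 n]
        abel
    have hcauchy : CauchySeq v := by
      apply cauchySeq_of_le_geometric (1/2 : ℝ) 1 (by norm_num)
      intro n
      have : v (n + 1) = v n + u n := by
        simp [hv, Finset.sum_range_succ, add_assoc]
      rw [dist_eq_norm, this]
      simp only [one_mul]
      have : v n - (v n + u n) = -(u n) := by abel
      rw [this, norm_neg]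
      exact (hu n).le
    have hcauchy' : CauchySeq (fun n => ((v n : Completion V))) :=
      hcauchy.map (Completion.uniformContinuous_coe V)
    obtain ⟨vbar, hvbar⟩ := cauchySeq_tendsto_of_complete hcauchy'
    refine ⟨vbar, ?_⟩
    have h1 : Tendsto (fun n => Completion.map (⇑φ) ((v n : Completion V))) atTop
        (nhds (Completion.map (⇑φ) vbar)) :=
      (Completion.continuous_map.tendsto _).comp hvbar
    have h1' : Tendsto (fun n => ((φ (x n) : W) : Completion W)) atTop
        (nhds (Completion.map (⇑φ) vbar)) := by
      apply h1.congr
      intro n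
      rw [Completion.map_coe hφ, hφv n]
    have h2 : Tendsto (fun n => ((φ (x n) : W) : Completion W)) atTop (nhds y) := by
      rw [tendsto_iff_dist_tendsto_zero]
      apply squeeze_zero (fun n => dist_nonneg) (g := fun n => (1/2 : ℝ) ^ n)
      · intro n
        have := hxd n
        rw [dist_comm] at this
        exact this.le.trans (hcpow n)
      · exact tendsto_pow_atTop_nhds_zero_of_lt_one (by norm_num) (by norm_num)
    exact tendsto_nhds_unique h1' h2
end
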